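/- Let λ be a probability distribution on {1,...,n} and let D_λ be the diagonal matrix with entries λ_i, and |ψ⟩ = Σ_i √λ_i |i⟩. Then the matrix 1 - 2 D_λ + |ψ⟩⟨ψ| is positive semidefinite. -/

import Mathlib

open Matrix

theorem one_sub_two_diag_add_psi_posSemidef (n : ℕ) (lam : Fin n → ℝ)
    (hpos : ∀ i, 0 ≤ lam i) (hsum : ∑ i, lam i = 1) :
    ((1 : Matrix (Fin n) (Fin n) ℝ) - 2 • Matrix.diagonal lam +
      Matrix.of (fun i j => Real.sqrt (lam i * lam j))).PosSemidef := by
  set a : Fin n → ℝ := fun i => Real.sqrt (lam i) with ha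
  have haa : ∀ i j, Real.sqrt (lam i * lam j) = a i * a j := fun i j =>
    Real.sqrt_mul (hpos i) _
  have ha2 : ∀ i, a i * a i = lam i := fun i => Real.mul_self_sqrt (hpos i)
  rw [posSemidef_iff_dotProduct_mulVec]; constructor
  · unfold Matrix.IsHermitian
    ext i j
    simp only [conjTranspose_apply, Matrix.sub_apply, Matrix.add_apply, one_apply, Matrix.smul_apply,
      diagonal_apply, of_apply, star_trivial, smul_eq_mul, haa]
    by_cases h : i = j <;> simp [h, eq_comm, mul_comm (a j)]
  · intro x
    have key : (star x) ⬝ᵥ (((1 : Matrix (Fin n) (Fin n) ℝ) - 2 • Matrix.diagonal lam +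
        Matrix.of (fun i j => Real.sqrt (lam i * lam j))) *ᵥ x) =
        (1/2) * ∑ i, ∑ j, (if i = j then 0 else (a j * x i + a i * x j)^2) := by
      have expand : ∀ i j, (if i = j then (0:ℝ) else (a j * x i + a i * x j)^2) =
          (a j * x i + a i * x j)^2 - (if i = j then (a j * x i + a i * x j)^2 else 0) := by
        intro i j; by_cases h : i = j <;> simp [h]
      simp only [dotProduct, mulVec, dotProduct, Matrix.sub_apply, Matrix.add_apply, one_apply,
        Matrix.smul_apply]
      simp only [diagonal_apply, of_apply, star_trivial, nsmul_eq_mul, Nat.cast_ofNat, haa, expand, Finset.sum_sub_distrib,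
        Finset.sum_ite_eq, Finset.mem_univ, if_true]
      have e1 : ∑ i, ∑ j, (a j * x i + a i * x j)^2 =
          2 * (∑ i, x i ^ 2) + 2 * (∑ i, a i * x i)^2 := by
        have : ∀ i j, (a j * x i + a i * x j)^2 =
            lam j * x i ^2 + lam i * x j ^2 + 2 * ((a i * x i) * (a j * x j)) := by
          intro i j
          have := ha2 i; have := ha2 j; ring_nf; nlinarith [ha2 i, ha2 j]
        simp only [this, Finset.sum_add_distrib, ← Finset.mul_sum, ← Finset.sum_mul]
        rw [hsum, sq]
        ring
      have e2 : ∑ i, (a i * x i + a i * x i)^2 = 4 * ∑ i, lam i * x i ^ 2 := by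
        rw [Finset.mul_sum]; apply Finset.sum_congr rfl; intro i _
        have := ha2 i; nlinarith [ha2 i]
      rw [e1, e2]
      have e3 : ∑ i, x i * ∑ j, ((if i = j then (1:ℝ) else 0) - 2 * (if i = j then lam i else 0)
          + a i * a j) * x j = (∑ i, x i ^ 2) - 2 * (∑ i, lam i * x i ^2)
          + (∑ i, a i * x i)^2 := by
        have : ∀ i, ∑ j, ((if i = j then (1:ℝ) else 0) - 2 * (if i = j then lam i else 0)
            + a i * a j) * x j = x i - 2 * (lam i * x i) + a i * ∑ j, a j * x j := by
          intro i
          simp only [sub_mul, add_mul, ite_mul, zero_mul, Finset.sum_add_distrib,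
            Finset.sum_sub_distrib, Finset.sum_ite_eq, Finset.mem_univ, if_true,
            mul_assoc, ← Finset.mul_sum]
          ring_nf
        simp only [this, mul_add, mul_sub, Finset.sum_add_distrib, Finset.sum_sub_distrib]
        congr 1
        · congr 1
          · exact Finset.sum_congr rfl fun i _ => (sq (x i)).symm
          · rw [Finset.mul_sum]; exact Finset.sum_congr rfl fun i _ => by ring
        · rw [sq, Finset.sum_mul]
          exact Finset.sum_congr rfl fun i _ => by ring
      rw [e3]
      ring
    rw [key]
    positivity
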